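/- Let ε ∈ (0,1/4) and τ ∈ (0, ε]. Suppose b : [-1-ε/2,0] → ℝ is continuous, b(t) > 0 for t ∈ (-1-ε/2, -τ), and b(t) < 0 for t ∈ (-τ, 0]. Let f be continuous with x·f(x) < 0 for x ≠ 0 and x_b its continuation. Then x_b(1-τ-ε/2) < 0 and x_b(1-τ+ε/2) > 0; consequently the first positive zero z₁(b) of x_b satisfies 1-τ-ε/2 < z₁(b) < 1-τ+ε/2. -/

import Mathlib

open Set MeasureTheory intervalIntegral Metric

theorem first_zero_localization (ε τ : ℝ) (hε : ε ∈ Set.Ioo (0:ℝ) (1/4))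
    (hτ : τ ∈ Set.Ioc (0:ℝ) ε)
    (f : ℝ → ℝ) (hf : Continuous f)
    (hfb : ∀ x : ℝ, x ≠ 0 → x * f x < 0)
    (b : ℝ → ℝ) (hb : ContinuousOn b (Set.Icc (-1 - ε/2) 0))
    (hbpos : ∀ t ∈ Set.Ioo (-1 - ε/2) (-τ), 0 < b t)
    (hbneg : ∀ t ∈ Set.Ioc (-τ) (0:ℝ), b t < 0)
    (xb : ℝ → ℝ) (hxbc : ContinuousOn xb (Set.Ici 0))
    (hxb0 : ∀ t ∈ Set.Ico (-1 - ε/2) (0:ℝ), xb t = b t)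
    (hxb : ∀ t : ℝ, 0 ≤ t →
      xb t = (1/ε) * ∫ s in (t - 1 - ε/2)..(t - 1 + ε/2), f (xb s)) :
    xb (1 - τ - ε/2) < 0 ∧ 0 < xb (1 - τ + ε/2) ∧
    1 - τ - ε/2 < sSup {t : ℝ | 0 ≤ t ∧ ∀ s ∈ Set.Icc 0 t, xb s < 0} ∧
    sSup {t : ℝ | 0 ≤ t ∧ ∀ s ∈ Set.Icc 0 t, xb s < 0} < 1 - τ + ε/2 := by
  obtain ⟨hε0, hε4⟩ := hε
  obtain ⟨hτ0, hτε⟩ := hτ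
  have hfpos : ∀ x : ℝ, x < 0 → 0 < f x := by
    intro x hx; nlinarith [hfb x hx.ne]
  have hfneg : ∀ x : ℝ, 0 < x → f x < 0 := by
    intro x hx; nlinarith [hfb x hx.ne']
  have hxbIco : ContinuousOn xb (Ico (-1 - ε/2) 0) :=
    (hb.mono Ico_subset_Icc_self).congr hxb0
  have ht₁0 : (0:ℝ) < 1 - τ - ε/2 := by linarith
  -- key: xb is negative on [0, 1-τ-ε/2]
  have key : ∀ t ∈ Icc (0:ℝ) (1 - τ - ε/2), xb t < 0 := by
    intro t ht
    obtain ⟨ht0, ht1⟩ := ht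
    have hab : t - 1 - ε/2 < t - 1 + ε/2 := by linarith
    have hsub : Icc (t-1-ε/2) (t-1+ε/2) ⊆ Ico (-1-ε/2) 0 := by
      intro s hs
      exact ⟨by linarith [hs.1], by linarith [hs.2]⟩
    have hint : IntervalIntegrable (fun s => f (xb s)) volume (t-1-ε/2) (t-1+ε/2) := by
      apply ContinuousOn.intervalIntegrable
      rw [uIcc_of_le hab.le]
      exact hf.comp_continuousOn (hxbIco.mono hsub)
    have hneg : ∀ s ∈ Ioo (t-1-ε/2) (t-1+ε/2), 0 < -(f (xb s)) := by
      intro s hs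
      have hs1 : s ∈ Ico (-1-ε/2) 0 := hsub ⟨hs.1.le, hs.2.le⟩
      have hbs : 0 < b s := hbpos s ⟨hs.1.trans_le' (by linarith), by linarith [hs.2]⟩
      rw [hxb0 s hs1]
      simpa using hfneg (b s) hbs
    have hI : (0:ℝ) < ∫ s in (t-1-ε/2)..(t-1+ε/2), -(f (xb s)) :=
      intervalIntegral_pos_of_pos_on hint.neg hneg hab
    rw [intervalIntegral.integral_neg] at hI
    rw [hxb t ht0]
    have : (∫ s in (t-1-ε/2)..(t-1+ε/2), f (xb s)) < 0 := by linarith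
    exact mul_neg_of_pos_of_neg (by positivity) this
  -- second claim
  have ht₂0 : (0:ℝ) ≤ 1 - τ + ε/2 := by linarith
  have h2 : 0 < xb (1 - τ + ε/2) := by
    have e1 : 1 - τ + ε/2 - 1 - ε/2 = -τ := by ring
    have e2 : 1 - τ + ε/2 - 1 + ε/2 = ε - τ := by ring
    rw [hxb _ ht₂0, e1, e2]
    have hIa : IntervalIntegrable (fun s => f (xb s)) volume (-τ) 0 := by
      have hb' : IntervalIntegrable (fun s => f (b s)) volume (-τ) 0 := by
        apply ContinuousOn.intervalIntegrable
        rw [uIcc_of_le (by linarith : (-τ:ℝ) ≤ 0)]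
        exact hf.comp_continuousOn (hb.mono (fun s hs => ⟨by linarith [hs.1], hs.2⟩))
      apply hb'.congr_ae
      rw [Filter.EventuallyEq, ae_iff]
      rw [Measure.restrict_apply' measurableSet_uIoc]
      refine measure_mono_null ?_ (Real.volume_singleton (a := 0))
      intro s hs
      obtain ⟨hne, hmem⟩ := hs
      rw [uIoc_of_le (by linarith : (-τ:ℝ) ≤ 0)] at hmem
      by_contra h
      exact hne (congrArg f (hxb0 s ⟨by linarith [hmem.1], lt_of_le_of_ne hmem.2 h⟩)).symm
    have hIb : IntervalIntegrable (fun s => f (xb s)) volume 0 (ε - τ) := by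
      apply ContinuousOn.intervalIntegrable
      rw [uIcc_of_le (by linarith : (0:ℝ) ≤ ε - τ)]
      exact hf.comp_continuousOn (hxbc.mono (fun s hs => hs.1))
    have hint : IntervalIntegrable (fun s => f (xb s)) volume (-τ) (ε - τ) :=
      hIa.trans hIb
    have hpos : ∀ s ∈ Ioo (-τ) (ε - τ), 0 < f (xb s) := by
      intro s hs
      rcases lt_or_ge s 0 with h | h
      · have : xb s = b s := hxb0 s ⟨by linarith [hs.1], h⟩
        rw [this]
        exact hfpos _ (hbneg s ⟨hs.1, h.le⟩)
      · exact hfpos _ (key s ⟨h, by linarith [hs.2]⟩)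
    have hI : (0:ℝ) < ∫ s in (-τ)..(ε - τ), f (xb s) :=
      intervalIntegral_pos_of_pos_on hint hpos (by linarith)
    positivity
  refine ⟨key _ ⟨ht₁0.le, le_rfl⟩, h2, ?_, ?_⟩
  · -- lower bound on sSup
    have hc : ContinuousWithinAt xb (Ici 0) (1 - τ - ε/2) :=
      hxbc _ ht₁0.le
    have hev : xb ⁻¹' (Iio 0) ∈ nhdsWithin (1 - τ - ε/2) (Ici 0) :=
      hc (Iio_mem_nhds (key _ ⟨ht₁0.le, le_rfl⟩))
    rw [Metric.mem_nhdsWithin_iff] at hev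
    obtain ⟨δ, hδ0, hδ⟩ := hev
    have htS : (1 - τ - ε/2 + δ/2) ∈ {t : ℝ | 0 ≤ t ∧ ∀ s ∈ Set.Icc 0 t, xb s < 0} := by
      constructor
      · linarith
      · intro s hs
        rcases le_or_gt s (1 - τ - ε/2) with h | h
        · exact key s ⟨hs.1, h⟩
        · have : s ∈ ball (1 - τ - ε/2) δ ∩ Ici 0 := by
            constructor
            · rw [mem_ball, Real.dist_eq, abs_lt]
              constructor <;> [linarith; linarith [hs.2]]
            · exact hs.1
          exact hδ this
    have hbdd : BddAbove {t : ℝ | 0 ≤ t ∧ ∀ s ∈ Set.Icc 0 t, xb s < 0} := by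
      refine ⟨1 - τ + ε/2, fun t ht => ?_⟩
      by_contra h
      push_neg at h
      exact absurd (ht.2 _ ⟨ht₂0, h.le⟩) (not_lt.2 h2.le)
    calc 1 - τ - ε/2 < 1 - τ - ε/2 + δ/2 := by linarith
      _ ≤ _ := le_csSup hbdd htS
  · -- upper bound on sSup
    have hc : ContinuousWithinAt xb (Ici 0) (1 - τ + ε/2) := hxbc _ ht₂0
    have hev : xb ⁻¹' (Ioi 0) ∈ nhdsWithin (1 - τ + ε/2) (Ici 0) :=
      hc (Ioi_mem_nhds h2)
    rw [Metric.mem_nhdsWithin_iff] at hev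
    obtain ⟨δ, hδ0, hδ⟩ := hev
    set m := min δ (1 - τ + ε/2) with hm
    have hm0 : 0 < m := lt_min hδ0 (by linarith)
    have hmδ : m ≤ δ := min_le_left _ _
    have hmt : m ≤ 1 - τ + ε/2 := min_le_right _ _
    have hne : (0:ℝ) ∈ {t : ℝ | 0 ≤ t ∧ ∀ s ∈ Set.Icc 0 t, xb s < 0} := by
      refine ⟨le_rfl, fun s hs => ?_⟩
      have : s = 0 := le_antisymm hs.2 hs.1
      exact key s ⟨hs.1, by rw [this]; linarith⟩
    have hle : sSup {t : ℝ | 0 ≤ t ∧ ∀ s ∈ Set.Icc 0 t, xb s < 0} ≤ 1 - τ + ε/2 - m/2 := by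
      apply csSup_le ⟨0, hne⟩
      intro t ht
      by_contra h
      push_neg at h
      set s₀ := min t (1 - τ + ε/2) with hs₀
      have hs₀0 : 0 ≤ s₀ := le_min ht.1 (by linarith)
      have hs₀t : s₀ ≤ t := min_le_left _ _
      have hneg : xb s₀ < 0 := ht.2 s₀ ⟨hs₀0, hs₀t⟩
      have hs₀lb : 1 - τ + ε/2 - m/2 < s₀ := lt_min h (by linarith)
      have : s₀ ∈ ball (1 - τ + ε/2) δ ∩ Ici 0 := by
        constructor
        · rw [mem_ball, Real.dist_eq, abs_lt]
          constructor
          · linarith [min_le_right t (1 - τ + ε/2)]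
          · have := min_le_right t (1 - τ + ε/2); linarith
        · exact hs₀0
      exact absurd (hδ this) (not_lt.2 hneg.le)
    linarith
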